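/- For any s ∈ S, the without-replacement sampling probabilities satisfy p(S) + p(S\{s}) · (1 - ∑_{s'∈S} p(s'))/(1 - ∑_{s'∈S\{s}} p(s')) = p^{D\{s}}(S\{s}). -/

import Mathlib

open Finset MeasureTheory

variable {α : Type*}

/-- Probability of drawing the ordered sample `B` sequentially without replacement
from (unnormalized) weights `p`, when `t` is the total remaining probability mass. -/
noncomputable def ordProb (p : α → ℝ) : ℝ → List α → ℝ
  | _, [] => 1
  | t, b :: L => (p b / t) * ordProb p (t - p b) L

/-- Probability of drawing the unordered sample `S` without replacement:
sum of `ordProb` over all orderings of `S`. -/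
noncomputable def setProb (p : α → ℝ) (t : ℝ) (S : Finset α) : ℝ :=
  (S.toList.permutations.map (ordProb p t)).sum

lemma setProb_eq_sum [DecidableEq α] (p : α → ℝ) (t : ℝ) (S : Finset α) :
    setProb p t S = ∑ L ∈ S.toList.permutations.toFinset, ordProb p t L := by
  rw [setProb, List.sum_toFinset _ (List.nodup_permutations _ S.nodup_toList)]

lemma setProb_empty (p : α → ℝ) (t : ℝ) : setProb p (t) (∅ : Finset α) = 1 := by
  simp [setProb, ordProb]

lemma perms_toFinset_eq [DecidableEq α] (S : Finset α) (hS : S.Nonempty) :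
    S.toList.permutations.toFinset =
      S.biUnion (fun b => ((S.erase b).toList.permutations.toFinset).image (b :: ·)) := by
  ext L
  simp only [List.mem_toFinset, List.mem_permutations, mem_biUnion, mem_image]
  constructor
  · intro h
    cases L with
    | nil =>
      exfalso
      have : S.toList = [] := (h.symm).eq_nil
      simp [Finset.toList_eq_nil] at this
      exact hS.ne_empty this
    | cons b M =>
      have hmem : b ∈ S := by
        have := h.mem_iff.mp (List.mem_cons_self : b ∈ b :: M)
        rwa [Finset.mem_toList] at this
      refine ⟨b, hmem, M, ?_, rfl⟩
      have h1 : (b ::ₘ (M : Multiset α)) = S.val := by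
        have h' := Multiset.coe_eq_coe.mpr h
        rw [Finset.coe_toList] at h'
        simpa using h'
      have h2 : (M : Multiset α) = S.val.erase b := by
        rw [← h1, Multiset.erase_cons_head]
      rw [← Multiset.coe_eq_coe, Finset.coe_toList]
      rw [Finset.erase_val, h2]
  · rintro ⟨b, hb, M, hM, rfl⟩
    have h2 : (M : Multiset α) = S.val.erase b := by
      rw [← Finset.erase_val, ← Finset.coe_toList (S.erase b), Multiset.coe_eq_coe]
      exact hM
    rw [← Multiset.coe_eq_coe, Finset.coe_toList]
    show b ::ₘ (M : Multiset α) = S.val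
    rw [h2, Multiset.cons_erase (by exact hb)]

lemma setProb_rec [DecidableEq α] (p : α → ℝ) (t : ℝ) (S : Finset α) (hS : S.Nonempty) :
    setProb p t S = ∑ b ∈ S, (p b / t) * setProb p (t - p b) (S.erase b) := by
  rw [setProb_eq_sum, perms_toFinset_eq S hS, Finset.sum_biUnion]
  · refine Finset.sum_congr rfl fun b _ => ?_
    rw [Finset.sum_image (by intro x _ y _ h; exact (List.cons_eq_cons.mp h).2),
      setProb_eq_sum, Finset.mul_sum]
    refine Finset.sum_congr rfl fun M _ => ?_
    rfl
  · intro b hb c hc hbc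
    simp only [Finset.disjoint_left, mem_image]
    rintro L ⟨M, _, rfl⟩ ⟨N, _, hN⟩
    exact hbc (List.cons_eq_cons.mp hN).1.symm

lemma key [DecidableEq α] (p : α → ℝ) (T : Finset α) :
    ∀ (s : α) (t : ℝ), s ∉ T → (∀ x ∈ insert s T, 0 < p x) →
      (∑ x ∈ insert s T, p x) < t →
      setProb p t (insert s T) + setProb p t T *
          ((t - ∑ x ∈ insert s T, p x) / (t - ∑ x ∈ T, p x))
        = setProb p (t - p s) T := by
  induction T using Finset.strongInduction with
  | _ T ih =>
  intro s t hsT hpos hlt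
  have hps : 0 < p s := hpos s (mem_insert_self s T)
  have hsum_pos : (0:ℝ) ≤ ∑ x ∈ T, p x :=
    Finset.sum_nonneg fun x hx => (hpos x (mem_insert_of_mem hx)).le
  rw [Finset.sum_insert hsT] at hlt
  have htT : (∑ x ∈ T, p x) < t - p s := by linarith
  have ht' : (0:ℝ) < t - p s := lt_of_le_of_lt hsum_pos htT
  have ht : (0:ℝ) < t := by linarith
  rcases T.eq_empty_or_nonempty with rfl | hT
  · rw [setProb_rec p t (insert s ∅) ⟨s, mem_insert_self s ∅⟩]
    simp only [Finset.insert_empty, Finset.sum_singleton, Finset.erase_singleton,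
      setProb_empty, Finset.sum_empty, mul_one, one_mul, sub_zero]
    field_simp
    ring
  · have hA : setProb p t (insert s T) =
        setProb p (t - p s) T - setProb p t T *
          ((t - (p s + ∑ x ∈ T, p x)) / (t - ∑ x ∈ T, p x)) := by
      rw [setProb_rec p t (insert s T) ⟨s, mem_insert_self s T⟩, Finset.sum_insert hsT,
        Finset.erase_insert hsT]
      have hstep : ∀ b ∈ T, (p b / t) * setProb p (t - p b) ((insert s T).erase b)
          = (p b / t) * setProb p ((t - p s) - p b) (T.erase b)
            - ((t - (p s + ∑ x ∈ T, p x)) / (t - ∑ x ∈ T, p x)) *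
              ((p b / t) * setProb p (t - p b) (T.erase b)) := by
        intro b hb
        have hbs : b ≠ s := fun h => hsT (h ▸ hb)
        have hbe : (insert s T).erase b = insert s (T.erase b) :=
          Finset.erase_insert_of_ne hbs.symm
        have hsub : T.erase b ⊂ T := Finset.erase_ssubset hb
        have hsTb : s ∉ T.erase b := fun h => hsT (Finset.mem_of_mem_erase h)
        have hposb : ∀ x ∈ insert s (T.erase b), 0 < p x := by
          intro x hx
          rcases Finset.mem_insert.mp hx with rfl | hx
          · exact hps
          · exact hpos x (mem_insert_of_mem (Finset.mem_of_mem_erase hx))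
        have hsumerase : ∑ x ∈ T.erase b, p x = (∑ x ∈ T, p x) - p b := by
          rw [← Finset.add_sum_erase T p hb]; ring
        have hltb : (∑ x ∈ insert s (T.erase b), p x) < t - p b := by
          rw [Finset.sum_insert hsTb, hsumerase]; linarith
        have := ih (T.erase b) hsub s (t - p b) hsTb hposb hltb
        rw [Finset.sum_insert hsTb, hsumerase] at this
        have heq : setProb p (t - p b) (insert s (T.erase b))
            = setProb p ((t - p b) - p s) (T.erase b)
              - setProb p (t - p b) (T.erase b) *
                ((t - p b - (p s + ((∑ x ∈ T, p x) - p b))) / (t - p b - ((∑ x ∈ T, p x) - p b))) := by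
          linarith [this]
        rw [hbe, heq]
        have e1 : t - p b - (p s + ((∑ x ∈ T, p x) - p b)) = t - (p s + ∑ x ∈ T, p x) := by ring
        have e2 : t - p b - ((∑ x ∈ T, p x) - p b) = t - ∑ x ∈ T, p x := by ring
        have e3 : (t - p b) - p s = (t - p s) - p b := by ring
        rw [e1, e2, e3]
        ring
      rw [Finset.sum_congr rfl hstep, Finset.sum_sub_distrib, ← Finset.mul_sum,
        ← setProb_rec p t T hT]
      have hsum1 : ∑ b ∈ T, (p b / t) * setProb p ((t - p s) - p b) (T.erase b)
          = ((t - p s) / t) * setProb p (t - p s) T := by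
        rw [setProb_rec p (t - p s) T hT, Finset.mul_sum]
        refine Finset.sum_congr rfl fun b hb => ?_
        rw [← mul_assoc]
        congr 1
        field_simp
      rw [hsum1]
      have hAps : p s / t * setProb p (t - p s) T + (t - p s) / t * setProb p (t - p s) T
          = setProb p (t - p s) T := by
        rw [← add_mul]
        have : p s / t + (t - p s) / t = 1 := by field_simp; ring
        rw [this, one_mul]
      linarith [hAps]
    rw [hA, Finset.sum_insert hsT]
    ring

theorem setProb_leave_one_out_relation [DecidableEq α] (D S : Finset α) (hS : S ⊆ D)
    (s : α) (hs : s ∈ S) (p : α → ℝ) (hp : ∀ x ∈ D, 0 < p x)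
    (hsum : ∑ x ∈ D, p x = 1) (hmass : ∑ s' ∈ S, p s' < 1) :
    setProb p 1 S + setProb p 1 (S.erase s) *
        ((1 - ∑ s' ∈ S, p s') / (1 - ∑ s' ∈ S.erase s, p s'))
      = setProb p (1 - p s) (S.erase s) := by
  have hins : insert s (S.erase s) = S := Finset.insert_erase hs
  have h := key p (S.erase s) s 1 (Finset.notMem_erase s S)
    (by intro x hx; rw [hins] at hx; exact hp x (hS hx))
    (by rw [hins]; exact hmass)
  rw [hins] at h
  exact h
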